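/- For 0 < R < 1, 0 < ε < 1 and q ≥ 2, with κ₀ = 1 − R − (√(4R(1−R)(q−1)+1) − 1)/(2(q−1)), the quantity (1−R)·log_q(κ₀/ε²) + R·log_q((2R−1+κ₀)/(1−ε)²) is strictly positive. -/
import Mathlib


/-- For `0 < R < 1`, `0 < ε < 1`, `q ≥ 2` and
`κ₀ = 1 - R - (√(4R(1-R)(q-1)+1) - 1)/(2(q-1))`, the quantity
`(1-R) log_q(κ₀/ε²) + R log_q((2R-1+κ₀)/(1-ε)²)` is strictly positive. -/
theorem stmt_16 (q R ε : ℝ) (hq : 2 ≤ q) (hR0 : 0 < R) (hR1 : R < 1)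
    (hε0 : 0 < ε) (hε1 : ε < 1) :
    0 < (1 - R) * Real.logb q
          ((1 - R - (Real.sqrt (4 * R * (1 - R) * (q - 1) + 1) - 1) / (2 * (q - 1)))
            / ε ^ 2)
        + R * Real.logb q
          ((2 * R - 1
              + (1 - R - (Real.sqrt (4 * R * (1 - R) * (q - 1) + 1) - 1) / (2 * (q - 1))))
            / (1 - ε) ^ 2) := by
  have hq1 : (1:ℝ) < q := by linarith
  have hq0 : 0 < q - 1 := by linarith
  have hR1' : 0 < 1 - R := by linarith
  have hε1' : 0 < 1 - ε := by linarith
  set D : ℝ := 4 * R * (1 - R) * (q - 1) + 1 with hD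
  have hDpos : 0 < D := by positivity
  have hsq : Real.sqrt D < 2 * (q - 1) * R * (1 - R) + 1 := by
    have h : D < (2 * (q - 1) * R * (1 - R) + 1) ^ 2 := by
      rw [hD]
      nlinarith [pow_pos (show (0:ℝ) < 2 * (q - 1) * R * (1 - R) by positivity) 2]
    calc Real.sqrt D < Real.sqrt ((2 * (q - 1) * R * (1 - R) + 1) ^ 2) :=
          Real.sqrt_lt_sqrt hDpos.le h
      _ = 2 * (q - 1) * R * (1 - R) + 1 := Real.sqrt_sq (by positivity)
  set κ : ℝ := 1 - R - (Real.sqrt D - 1) / (2 * (q - 1)) with hκ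
  have hκlb : (1 - R) ^ 2 < κ := by
    have h : (Real.sqrt D - 1) / (2 * (q - 1)) < R * (1 - R) := by
      rw [div_lt_iff₀ (by linarith)]
      nlinarith
    rw [hκ]
    nlinarith [h]
  have hκpos : 0 < κ := lt_trans (by positivity) hκlb
  have h2 : R ^ 2 < 2 * R - 1 + κ := by nlinarith
  have h2pos : 0 < 2 * R - 1 + κ := lt_trans (by positivity) h2
  have hε2 : (0:ℝ) < ε ^ 2 := by positivity
  have hε2' : (0:ℝ) < (1 - ε) ^ 2 := by positivity
  -- strict monotonicity of logb
  have l1 : Real.logb q ((1 - R) ^ 2 / ε ^ 2) < Real.logb q (κ / ε ^ 2) := by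
    apply Real.logb_lt_logb hq1 (by positivity)
    gcongr
  have l2 : Real.logb q (R ^ 2 / (1 - ε) ^ 2) <
      Real.logb q ((2 * R - 1 + κ) / (1 - ε) ^ 2) := by
    apply Real.logb_lt_logb hq1 (by positivity)
    gcongr
  -- Gibbs inequality: main nonnegative lower bound
  have hlq : 0 < Real.log q := Real.log_pos hq1
  have key : 0 ≤ (1 - R) * Real.log ((1 - R) ^ 2 / ε ^ 2)
      + R * Real.log (R ^ 2 / (1 - ε) ^ 2) := by
    have e1 : Real.log ((1 - R) ^ 2 / ε ^ 2)
        = 2 * Real.log (1 - R) - 2 * Real.log ε := by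
      rw [Real.log_div (by positivity) (by positivity), Real.log_pow, Real.log_pow]
      push_cast; ring
    have e2 : Real.log (R ^ 2 / (1 - ε) ^ 2)
        = 2 * Real.log R - 2 * Real.log (1 - ε) := by
      rw [Real.log_div (by positivity) (by positivity), Real.log_pow, Real.log_pow]
      push_cast; ring
    have g1 : Real.log (ε / (1 - R)) ≤ ε / (1 - R) - 1 :=
      Real.log_le_sub_one_of_pos (by positivity)
    have g2 : Real.log ((1 - ε) / R) ≤ (1 - ε) / R - 1 :=
      Real.log_le_sub_one_of_pos (by positivity)
    rw [Real.log_div hε0.ne' hR1'.ne'] at g1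
    rw [Real.log_div hε1'.ne' hR0.ne'] at g2
    have m1 : (1 - R) * (ε / (1 - R)) = ε := by field_simp
    have m2 : R * ((1 - ε) / R) = 1 - ε := by field_simp
    rw [e1, e2]
    nlinarith [mul_le_mul_of_nonneg_left g1 hR1'.le,
      mul_le_mul_of_nonneg_left g2 hR0.le]
  have main : 0 ≤ (1 - R) * Real.logb q ((1 - R) ^ 2 / ε ^ 2)
      + R * Real.logb q (R ^ 2 / (1 - ε) ^ 2) := by
    have heq : (1 - R) * Real.logb q ((1 - R) ^ 2 / ε ^ 2)
        + R * Real.logb q (R ^ 2 / (1 - ε) ^ 2)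
        = ((1 - R) * Real.log ((1 - R) ^ 2 / ε ^ 2)
            + R * Real.log (R ^ 2 / (1 - ε) ^ 2)) / Real.log q := by
      simp only [Real.logb]; ring
    rw [heq]
    exact div_nonneg key hlq.le
  nlinarith [mul_lt_mul_of_pos_left l1 hR1', mul_lt_mul_of_pos_left l2 hR0]
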